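/- Let f : ℝ^d → ℝ be twice continuously differentiable with λmin·I ⪯ ∇²f(x) ⪯ λmax·I for all x and L-Lipschitz Hessian, with unique minimizer x*, and let β ∈ (0,1/2). Suppose x ∈ N_ν, H̃ is a symmetric matrix with (1-ψ)H(x) ⪯ H̃ ⪯ (1+ψ)H(x), and p = -H̃⁻¹∇f(x), where 0 < ν ≤ (2/3)(1/2 - β) and 0 < ψ ≤ (1/2 - β)/(3/2 - β). Then ‖x + p - x*‖_{H*} ≤ 3(ν + ψ)·‖x - x*‖_{H*}; in particular this yields a linear contraction whenever 3(ν + ψ) < 1. -/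

import Mathlib

open Real
open scoped BigOperators Matrix

/-- Spectral norm (ℓ₂ operator norm) of a real matrix. -/
noncomputable def specNorm {d : ℕ} (A : Matrix (Fin d) (Fin d) ℝ) : ℝ :=
  ‖Matrix.toEuclideanCLM (𝕜 := ℝ) A‖

/-- Euclidean (ℓ₂) norm of a vector. -/
noncomputable def vnorm {d : ℕ} (v : Fin d → ℝ) : ℝ := Real.sqrt (∑ i, v i ^ 2)

/-- The norm ‖v‖_A = √(vᵀAv) induced by a positive semidefinite matrix A. -/
noncomputable def Mnorm {d : ℕ} (A : Matrix (Fin d) (Fin d) ℝ) (v : Fin d → ℝ) : ℝ :=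
  Real.sqrt (dotProduct v (A.mulVec v))

namespace Stmt8
variable {d : ℕ}

lemma dot_self_eq (v : Fin d → ℝ) : dotProduct v v = ∑ i, v i ^ 2 := by
  simp [dotProduct, sq]

lemma vnorm_eq (v : Fin d → ℝ) :
    vnorm v = ‖(WithLp.equiv 2 (Fin d → ℝ)).symm v‖ := by
  rw [EuclideanSpace.norm_eq, vnorm]
  congr 1; apply Finset.sum_congr rfl; intro i _; simp [sq_abs]

lemma vnorm_nonneg (v : Fin d → ℝ) : 0 ≤ vnorm v := Real.sqrt_nonneg _

lemma vnorm_sq (v : Fin d → ℝ) : vnorm v ^ 2 = dotProduct v v := by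
  rw [dot_self_eq, vnorm, Real.sq_sqrt]
  positivity

lemma vnorm_zero_iff (v : Fin d → ℝ) : vnorm v = 0 ↔ v = 0 := by
  rw [vnorm_eq, norm_eq_zero]
  constructor
  · intro h; have := congrArg (WithLp.equiv 2 (Fin d → ℝ)) h; simpa using this
  · intro h; subst h; simp

lemma vnorm_add_le (v w : Fin d → ℝ) : vnorm (v + w) ≤ vnorm v + vnorm w := by
  rw [vnorm_eq, vnorm_eq, vnorm_eq, WithLp.equiv_symm_apply, WithLp.toLp_add]; exact norm_add_le _ _

lemma vnorm_smul (c : ℝ) (v : Fin d → ℝ) : vnorm (c • v) = |c| * vnorm v := by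
  rw [vnorm_eq, vnorm_eq, WithLp.equiv_symm_apply, WithLp.toLp_smul, norm_smul, Real.norm_eq_abs]

lemma abs_dot_le (v w : Fin d → ℝ) : |dotProduct v w| ≤ vnorm v * vnorm w := by
  rw [vnorm_eq, vnorm_eq]
  have := abs_real_inner_le_norm ((WithLp.equiv 2 (Fin d → ℝ)).symm v)
      ((WithLp.equiv 2 (Fin d → ℝ)).symm w)
  have h2 : (inner ℝ ((WithLp.equiv 2 (Fin d → ℝ)).symm v) ((WithLp.equiv 2 (Fin d → ℝ)).symm w) : ℝ)
      = dotProduct v w := by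
    rw [PiLp.inner_apply]; simp [dotProduct, mul_comm]
  rwa [h2] at this

lemma mulVec_vnorm_le (A : Matrix (Fin d) (Fin d) ℝ) (v : Fin d → ℝ) :
    vnorm (A.mulVec v) ≤ specNorm A * vnorm v := by
  rw [vnorm_eq, vnorm_eq, WithLp.equiv_symm_apply, ← Matrix.toEuclideanCLM_toLp]
  exact (Matrix.toEuclideanCLM (𝕜 := ℝ) A).le_opNorm _

lemma quad_of_psd {A : Matrix (Fin d) (Fin d) ℝ} (h : A.PosSemidef) (v : Fin d → ℝ) :
    0 ≤ dotProduct v (A.mulVec v) := by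
  simpa using h.dotProduct_mulVec_nonneg v

lemma psd_of_quad {A : Matrix (Fin d) (Fin d) ℝ} (hA : Aᵀ = A)
    (h : ∀ v, 0 ≤ dotProduct v (A.mulVec v)) : A.PosSemidef := by
  refine Matrix.PosSemidef.of_dotProduct_mulVec_nonneg ?_ (fun v => by simpa using h v)
  rw [Matrix.IsHermitian, Matrix.conjTranspose_eq_transpose_of_trivial, hA]

lemma herm_transpose {A : Matrix (Fin d) (Fin d) ℝ} (h : A.IsHermitian) : Aᵀ = A := by
  rw [← Matrix.conjTranspose_eq_transpose_of_trivial]; exact h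

lemma dot_symm {A : Matrix (Fin d) (Fin d) ℝ} (hA : Aᵀ = A) (v w : Fin d → ℝ) :
    dotProduct v (A.mulVec w) = dotProduct (A.mulVec v) w := by
  rw [Matrix.dotProduct_mulVec, ← Matrix.mulVec_transpose, hA]

lemma dot_symm' {A : Matrix (Fin d) (Fin d) ℝ} (hA : Aᵀ = A) (v w : Fin d → ℝ) :
    dotProduct v (A.mulVec w) = dotProduct w (A.mulVec v) := by
  rw [dot_symm hA, dotProduct_comm]

lemma dot_expand_add (D : Matrix (Fin d) (Fin d) ℝ) (u w : Fin d → ℝ) :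
    dotProduct (u + w) (D.mulVec (u + w)) =
      dotProduct u (D.mulVec u) + dotProduct u (D.mulVec w) +
      dotProduct w (D.mulVec u) + dotProduct w (D.mulVec w) := by
  rw [Matrix.mulVec_add, dotProduct_add, add_dotProduct, add_dotProduct]
  ring

lemma dot_expand_sub (D : Matrix (Fin d) (Fin d) ℝ) (u w : Fin d → ℝ) :
    dotProduct (u - w) (D.mulVec (u - w)) =
      dotProduct u (D.mulVec u) - dotProduct u (D.mulVec w) -
      dotProduct w (D.mulVec u) + dotProduct w (D.mulVec w) := by
  rw [Matrix.mulVec_sub, dotProduct_sub, sub_dotProduct, sub_dotProduct]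
  ring

lemma op_bound {D : Matrix (Fin d) (Fin d) ℝ} (hD : Dᵀ = D) {b : ℝ} (hb : 0 ≤ b)
    (h1 : ((b • (1 : Matrix (Fin d) (Fin d) ℝ)) - D).PosSemidef)
    (h2 : ((b • (1 : Matrix (Fin d) (Fin d) ℝ)) + D).PosSemidef)
    (v : Fin d → ℝ) : vnorm (D.mulVec v) ≤ b * vnorm v := by
  have quad : ∀ w : Fin d → ℝ,
      |dotProduct w (D.mulVec w)| ≤ b * dotProduct w w := by
    intro w
    have hq1 := quad_of_psd h1 w
    have hq2 := quad_of_psd h2 w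
    rw [Matrix.sub_mulVec, dotProduct_sub, Matrix.smul_mulVec,
      Matrix.one_mulVec, dotProduct_smul, smul_eq_mul] at hq1
    rw [Matrix.add_mulVec, dotProduct_add, Matrix.smul_mulVec,
      Matrix.one_mulVec, dotProduct_smul, smul_eq_mul] at hq2
    rw [abs_le]; constructor <;> linarith
  have bil : ∀ u w : Fin d → ℝ, dotProduct u (D.mulVec w) ≤
      b / 2 * (dotProduct u u + dotProduct w w) := by
    intro u w
    have hq1 := (abs_le.mp (quad (u + w))).2
    have hq2 := neg_le.mp (abs_le.mp (quad (u - w))).1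
    rw [dot_expand_add D u w] at hq1
    rw [dot_expand_sub D u w] at hq2
    have e1 : dotProduct (u + w) (u + w) =
        dotProduct u u + 2 * dotProduct u w + dotProduct w w := by
      rw [dotProduct_add, add_dotProduct, add_dotProduct,
        dotProduct_comm w u]
      ring
    have e2 : dotProduct (u - w) (u - w) =
        dotProduct u u - 2 * dotProduct u w + dotProduct w w := by
      rw [dotProduct_sub, sub_dotProduct, sub_dotProduct,
        dotProduct_comm w u]
      ring
    rw [dot_symm' hD w u, e1] at hq1
    rw [dot_symm' hD w u, e2] at hq2
    linarith
  by_cases hDv : D.mulVec v = 0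
  · rw [hDv, (vnorm_zero_iff (0 : Fin d → ℝ)).mpr rfl]
    exact mul_nonneg hb (vnorm_nonneg v)
  · have hpos : 0 < vnorm (D.mulVec v) :=
      lt_of_le_of_ne (vnorm_nonneg _) (fun h => hDv ((vnorm_zero_iff _).mp h.symm))
    have hvpos : 0 < vnorm v := by
      rcases lt_or_eq_of_le (vnorm_nonneg v) with h | h
      · exact h
      · exfalso; apply hDv
        rw [(vnorm_zero_iff v).mp h.symm, Matrix.mulVec_zero]
    set c : ℝ := vnorm v / vnorm (D.mulVec v) with hc
    have hcpos : 0 < c := div_pos hvpos hpos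
    have key := bil (c • D.mulVec v) v
    have hdot1 : dotProduct (c • D.mulVec v) (D.mulVec v) =
        c * (vnorm (D.mulVec v)) ^ 2 := by
      rw [smul_dotProduct, smul_eq_mul, vnorm_sq]
    have hdot2 : dotProduct (c • D.mulVec v) (c • D.mulVec v) = vnorm v ^ 2 := by
      rw [smul_dotProduct, dotProduct_smul, smul_eq_mul, smul_eq_mul,
        ← vnorm_sq (D.mulVec v), hc]
      field_simp
    have hcv : c * vnorm (D.mulVec v) ^ 2 = vnorm v * vnorm (D.mulVec v) := by
      rw [hc]; field_simp
    rw [hdot1, hdot2, hcv, ← vnorm_sq v] at key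
    nlinarith [vnorm_nonneg (D.mulVec v), hvpos]

open scoped MatrixOrder in
lemma exists_sqrt {A : Matrix (Fin d) (Fin d) ℝ} (hA : A.PosSemidef) :
    ∃ R : Matrix (Fin d) (Fin d) ℝ, R.PosSemidef ∧ R * R = A :=
  ⟨CFC.sqrt A, Matrix.nonneg_iff_posSemidef.mp (CFC.sqrt_nonneg A), CFC.sqrt_mul_sqrt_self A hA.nonneg⟩

lemma specNorm_nonneg (A : Matrix (Fin d) (Fin d) ℝ) : 0 ≤ specNorm A :=
  norm_nonneg _

lemma le_of_sq_le_sq {a b : ℝ} (ha : 0 ≤ a) (hb : 0 ≤ b) (h : a ^ 2 ≤ b ^ 2) : a ≤ b := by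
  have h2 := Real.sqrt_le_sqrt h
  rwa [Real.sqrt_sq ha, Real.sqrt_sq hb] at h2

end Stmt8
set_option maxHeartbeats 8000000 in
open Stmt8 in
/-- Corollary on local linear convergence: the Newton step with an
approximate Hessian contracts the error by a factor 3(ν + ψ). -/
theorem stmt8
    {d : ℕ} (f : (Fin d → ℝ) → ℝ) (g : (Fin d → ℝ) → Fin d → ℝ)
    (H : (Fin d → ℝ) → Matrix (Fin d) (Fin d) ℝ)
    (lmin lmax L : ℝ) (hlmin : 0 < lmin) (hlle : lmin ≤ lmax) (hL : 0 < L)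
    (hf : ContDiff ℝ 2 f)
    (hgrad : ∀ y v, fderiv ℝ f y v = dotProduct (g y) v)
    (hhess : ∀ y u v, fderiv ℝ (fun z => fderiv ℝ f z v) y u =
      dotProduct u ((H y).mulVec v))
    (hHsym : ∀ y, (H y).IsSymm)
    (hpsd : ∀ y, (H y).PosSemidef)
    (hlow : ∀ y, (H y - lmin • (1 : Matrix (Fin d) (Fin d) ℝ)).PosSemidef)
    (hup : ∀ y, (lmax • (1 : Matrix (Fin d) (Fin d) ℝ) - H y).PosSemidef)
    (hLip : ∀ y z, specNorm (H y - H z) ≤ L * vnorm (y - z))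
    (xstar : Fin d → ℝ) (hmin : ∀ y, f xstar ≤ f y)
    (huniq : ∀ y, (∀ z, f y ≤ f z) → y = xstar)
    (β ν ψ : ℝ) (hβ0 : 0 < β) (hβ : β < 1 / 2)
    (hν0 : 0 < ν) (hν : ν ≤ (2 / 3) * (1 / 2 - β))
    (hψ0 : 0 < ψ) (hψ : ψ ≤ (1 / 2 - β) / (3 / 2 - β))
    (x : Fin d → ℝ) (hx : Mnorm (H xstar) (x - xstar) ≤ ν * lmin ^ ((3 : ℝ) / 2) / L)
    (Ht : Matrix (Fin d) (Fin d) ℝ) (hHtsym : Ht.IsSymm)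
    (hHt1 : (Ht - (1 - ψ) • H x).PosSemidef)
    (hHt2 : ((1 + ψ) • H x - Ht).PosSemidef) :
    Mnorm (H xstar) (x + -(Ht⁻¹.mulVec (g x)) - xstar) ≤
      3 * (ν + ψ) * Mnorm (H xstar) (x - xstar) := by
  classical
  set e : Fin d → ℝ := x - xstar with he
  set Hs : Matrix (Fin d) (Fin d) ℝ := H xstar with hHsdef
  set K : Matrix (Fin d) (Fin d) ℝ := H x with hKdef
  have hHspsd : Hs.PosSemidef := hpsd xstar
  have hKpsd : K.PosSemidef := hpsd x
  have hKT : Kᵀ = K := herm_transpose hKpsd.1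
  have hHsT : Hsᵀ = Hs := herm_transpose hHspsd.1
  have hHtT : Htᵀ = Ht := hHtsym
  -- numeric bounds
  have hν1 : ν ≤ 1/3 := by linarith
  have hψ1 : ψ ≤ 1/3 := by
    have hb : (0:ℝ) < 3/2 - β := by linarith
    have h2 : (1/2 - β)/(3/2 - β) ≤ 1/3 := by rw [div_le_iff₀ hb]; linarith
    linarith
  set cns : ℝ := (1 - ψ) * (1 - ν) with hcns
  have hcpos : 0 < cns := by rw [hcns]; nlinarith
  -- quadratic lower bound for Hs
  have quadHs : ∀ v : Fin d → ℝ,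
      lmin * dotProduct v v ≤ dotProduct v (Hs.mulVec v) := by
    intro v
    have h := quad_of_psd (hlow xstar) v
    rw [Matrix.sub_mulVec, dotProduct_sub, Matrix.smul_mulVec,
      Matrix.one_mulVec, dotProduct_smul, smul_eq_mul] at h
    linarith
  have hdotpos : ∀ v : Fin d → ℝ, v ≠ 0 → 0 < dotProduct v v := by
    intro v hv
    have h1 : 0 < vnorm v :=
      lt_of_le_of_ne (vnorm_nonneg v) (fun h => hv ((vnorm_zero_iff v).mp h.symm))
    have := vnorm_sq v
    nlinarith
  -- square root of Hs
  obtain ⟨R, hRpsd, hRR⟩ := exists_sqrt hHspsd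
  have hRT : Rᵀ = R := herm_transpose hRpsd.1
  have hHsPD : Hs.PosDef := by
    refine Matrix.PosDef.of_dotProduct_mulVec_pos hHspsd.1 (fun v hv => ?_)
    have h1 := quadHs v
    have h2 := hdotpos v hv
    simpa using lt_of_lt_of_le (mul_pos hlmin h2) h1
  have hdetR : IsUnit R.det := by
    have h2 : R.det * R.det = Hs.det := by rw [← Matrix.det_mul, hRR]
    have h3 := hHsPD.det_pos
    refine isUnit_iff_ne_zero.mpr fun h0 => ?_
    rw [h0, mul_zero] at h2
    rw [← h2] at h3
    exact lt_irrefl _ h3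
  have hRinv : R * R⁻¹ = 1 := Matrix.mul_nonsing_inv _ hdetR
  have hRinv' : R⁻¹ * R = 1 := Matrix.nonsing_inv_mul _ hdetR
  have hRiT : (R⁻¹)ᵀ = R⁻¹ := by rw [Matrix.transpose_nonsing_inv, hRT]
  -- quadratic form of Hs as squared norm
  have hQuadR : ∀ v : Fin d → ℝ,
      dotProduct v (Hs.mulVec v) = vnorm (R.mulVec v) ^ 2 := by
    intro v
    rw [vnorm_sq, ← hRR, ← Matrix.mulVec_mulVec, dot_symm hRT]
  have hMn : ∀ v : Fin d → ℝ, Mnorm Hs v = vnorm (R.mulVec v) := by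
    intro v
    rw [Mnorm, hQuadR, Real.sqrt_sq (vnorm_nonneg _)]
  -- gradient vanishes at the minimizer
  have hgx0 : g xstar = 0 := by
    have hloc : IsLocalMin f xstar := Filter.Eventually.of_forall fun y => hmin y
    have h0 : fderiv ℝ f xstar = 0 := hloc.fderiv_eq_zero
    funext i
    have h1 := hgrad xstar (Pi.single i 1)
    rw [h0] at h1
    simp only [ContinuousLinearMap.zero_apply] at h1
    have h2 : dotProduct (g xstar) (Pi.single i 1) = g xstar i := by
      simp [dotProduct, Pi.single_apply]
    rw [h2] at h1
    simp [← h1]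
  -- Taylor estimate
  set r : Fin d → ℝ := K.mulVec e - g x with hrdef
  have taylor : ∀ u : Fin d → ℝ,
      |dotProduct r u| ≤ L * vnorm e ^ 2 * vnorm u := by
    intro u
    have hd1 : ContDiff ℝ 1 (fderiv ℝ f) := hf.fderiv_right (by norm_num)
    have hFdiff : Differentiable ℝ (fun z => fderiv ℝ f z u) :=
      (ContinuousLinearMap.apply ℝ ℝ u).differentiable.comp (hd1.differentiable (by norm_num))
    set γ : ℝ → (Fin d → ℝ) := fun t => xstar + t • e with hγ
    have hx' : x = xstar + e := by rw [he]; abel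
    have hγd : ∀ t : ℝ, HasDerivAt γ e t := by
      intro t
      have h1 : HasDerivAt (fun s : ℝ => s • e) ((1:ℝ) • e) t := (hasDerivAt_id t).smul_const e
      rw [one_smul] at h1; exact h1.const_add xstar
    set Φ : ℝ → ℝ := fun t => fderiv ℝ f (γ t) u - t * dotProduct e (K.mulVec u) with hΦ
    have hΦd : ∀ t : ℝ,
        HasDerivAt Φ (dotProduct e ((H (γ t) - K).mulVec u)) t := by
      intro t
      have h1 : HasFDerivAt (fun z => fderiv ℝ f z u)
          (fderiv ℝ (fun z => fderiv ℝ f z u) (γ t)) (γ t) := (hFdiff (γ t)).hasFDerivAt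
      have h2 : HasDerivAt (fun s => fderiv ℝ f (γ s) u)
          (fderiv ℝ (fun z => fderiv ℝ f z u) (γ t) e) t := h1.comp_hasDerivAt t (hγd t)
      rw [hhess (γ t) e u] at h2
      have h3 : HasDerivAt (fun s : ℝ => s * dotProduct e (K.mulVec u))
          (dotProduct e (K.mulVec u)) t := by
        simpa using (hasDerivAt_id t).mul_const (dotProduct e (K.mulVec u))
      have h4 := h2.sub h3
      rw [Matrix.sub_mulVec, dotProduct_sub]
      exact h4
    have hbound : ∀ t ∈ Set.Icc (0:ℝ) 1,
        ‖dotProduct e ((H (γ t) - K).mulVec u)‖ ≤ L * vnorm e ^ 2 * vnorm u := by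
      intro t ht
      rw [Real.norm_eq_abs]
      have h1 := abs_dot_le e ((H (γ t) - K).mulVec u)
      have h2 := mulVec_vnorm_le (H (γ t) - K) u
      have h3 := hLip (γ t) x
      have h4 : γ t - x = (t - 1) • e := by
        rw [hγ]
        simp only
        rw [hx', sub_smul, one_smul]
        abel
      have h5 : vnorm (γ t - x) ≤ vnorm e := by
        rw [h4, vnorm_smul]
        have : |t - 1| ≤ 1 := by
          rw [abs_le]; constructor <;> [linarith [ht.1]; linarith [ht.2]]
        nlinarith [vnorm_nonneg e]
      have h6 : specNorm (H (γ t) - K) ≤ L * vnorm e := by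
        calc specNorm (H (γ t) - K) ≤ L * vnorm (γ t - x) := h3
          _ ≤ L * vnorm e := by nlinarith
      have h7 : vnorm ((H (γ t) - K).mulVec u) ≤ L * vnorm e * vnorm u := by
        calc vnorm ((H (γ t) - K).mulVec u) ≤ specNorm (H (γ t) - K) * vnorm u := h2
          _ ≤ L * vnorm e * vnorm u := by nlinarith [vnorm_nonneg u]
      calc |dotProduct e ((H (γ t) - K).mulVec u)|
          ≤ vnorm e * vnorm ((H (γ t) - K).mulVec u) := h1
        _ ≤ vnorm e * (L * vnorm e * vnorm u) := by nlinarith [vnorm_nonneg e]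
        _ = L * vnorm e ^ 2 * vnorm u := by ring
    have hmvt := Convex.norm_image_sub_le_of_norm_hasDerivWithin_le
        (f := Φ) (f' := fun t => dotProduct e ((H (γ t) - K).mulVec u))
        (s := Set.Icc (0:ℝ) 1)
        (fun t _ => (hΦd t).hasDerivWithinAt) hbound (convex_Icc 0 1)
        (Set.left_mem_Icc.mpr zero_le_one) (Set.right_mem_Icc.mpr zero_le_one)
    have hγ1 : γ 1 = x := by rw [hγ]; simp only; rw [one_smul, hx']
    have hγ0 : γ 0 = xstar := by rw [hγ]; simp
    have hΦ1 : Φ 1 = dotProduct (g x) u - dotProduct e (K.mulVec u) := by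
      rw [hΦ]; simp only; rw [hγ1, hgrad, one_mul]
    have hΦ0 : Φ 0 = 0 := by
      rw [hΦ]; simp only; rw [hγ0, hgrad, hgx0, zero_mul, sub_zero, zero_dotProduct]
    rw [hΦ1, hΦ0, sub_zero, Real.norm_eq_abs] at hmvt
    have hru : dotProduct r u =
        -(dotProduct (g x) u - dotProduct e (K.mulVec u)) := by
      rw [hrdef, sub_dotProduct, dot_symm hKT]
      ring
    rw [hru, abs_neg]
    calc |dotProduct (g x) u - dotProduct e (K.mulVec u)|
        ≤ L * vnorm e ^ 2 * vnorm u * ‖(1:ℝ) - 0‖ := hmvt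
      _ = L * vnorm e ^ 2 * vnorm u := by norm_num
  have hrn : vnorm r ≤ L * vnorm e ^ 2 := by
    have h1 := taylor r
    rw [← vnorm_sq r] at h1
    have h2 := (abs_le.mp h1).2
    rcases le_or_gt (vnorm r) 0 with h | h
    · have h3 : 0 ≤ L * vnorm e ^ 2 := by positivity
      linarith
    · refine le_of_mul_le_mul_right ?_ h
      calc vnorm r * vnorm r = vnorm r ^ 2 := by ring
        _ ≤ L * vnorm e ^ 2 * vnorm r := h2
  -- bound on L * ‖e‖
  have hsl : 0 < Real.sqrt lmin := Real.sqrt_pos.mpr hlmin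
  have hMne : Real.sqrt lmin * vnorm e ≤ Mnorm Hs e := by
    rw [hMn e]
    have h1 : lmin * dotProduct e e ≤ vnorm (R.mulVec e) ^ 2 := by
      rw [← hQuadR]; exact quadHs e
    nlinarith [vnorm_nonneg (R.mulVec e), vnorm_nonneg e, vnorm_sq e,
      Real.sq_sqrt hlmin.le, Real.sqrt_nonneg lmin]
  have hLe : L * vnorm e ≤ ν * lmin := by
    have hpow : lmin ^ ((3:ℝ)/2) = lmin * Real.sqrt lmin := by
      rw [show ((3:ℝ)/2) = 1 + 1/2 by norm_num, Real.rpow_add hlmin, Real.rpow_one,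
        Real.sqrt_eq_rpow]
    have h1 : Real.sqrt lmin * vnorm e ≤ ν * (lmin * Real.sqrt lmin) / L := by
      rw [← hpow]; exact le_trans hMne hx
    have h2 : Real.sqrt lmin * vnorm e * L ≤ ν * (lmin * Real.sqrt lmin) :=
      (le_div_iff₀ hL).mp h1
    nlinarith [hsl, vnorm_nonneg e]
  -- relative closeness of K and Hs
  have quadK_Hs : ∀ v : Fin d → ℝ,
      |dotProduct v ((K - Hs).mulVec v)| ≤ ν * lmin * dotProduct v v := by
    intro v
    have h1 := abs_dot_le v ((K - Hs).mulVec v)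
    have h2 := mulVec_vnorm_le (K - Hs) v
    have h3 : specNorm (K - Hs) ≤ ν * lmin := by
      have := hLip x xstar
      rw [← he] at this
      exact le_trans this hLe
    have h4 := vnorm_sq v
    nlinarith [vnorm_nonneg v, vnorm_nonneg ((K - Hs).mulVec v),
      specNorm_nonneg (K - Hs), sq_nonneg (vnorm v)]
  have quadK_diff : ∀ v : Fin d → ℝ,
      |dotProduct v (K.mulVec v) - dotProduct v (Hs.mulVec v)|
        ≤ ν * dotProduct v (Hs.mulVec v) := by
    intro v
    have h1 := quadK_Hs v
    rw [Matrix.sub_mulVec, dotProduct_sub] at h1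
    have h2 := quadHs v
    have h3 := abs_le.mp h1
    rw [abs_le]
    constructor <;> nlinarith [hν0]
  have quadK_up : ∀ v : Fin d → ℝ, dotProduct v (K.mulVec v)
      ≤ (1 + ν) * dotProduct v (Hs.mulVec v) := by
    intro v
    have := (abs_le.mp (quadK_diff v)).2
    linarith
  have quadK_lo : ∀ v : Fin d → ℝ,
      (1 - ν) * dotProduct v (Hs.mulVec v) ≤ dotProduct v (K.mulVec v) := by
    intro v
    have := (abs_le.mp (quadK_diff v)).1
    linarith
  -- Ht quadratic bounds
  have quadHt_up : ∀ v : Fin d → ℝ, dotProduct v (Ht.mulVec v)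
      ≤ (1 + ψ) * dotProduct v (K.mulVec v) := by
    intro v
    have h := quad_of_psd hHt2 v
    rw [Matrix.sub_mulVec, dotProduct_sub, Matrix.smul_mulVec,
      dotProduct_smul, smul_eq_mul] at h
    linarith
  have quadHt_lo : ∀ v : Fin d → ℝ,
      (1 - ψ) * dotProduct v (K.mulVec v) ≤ dotProduct v (Ht.mulVec v) := by
    intro v
    have h := quad_of_psd hHt1 v
    rw [Matrix.sub_mulVec, dotProduct_sub, Matrix.smul_mulVec,
      dotProduct_smul, smul_eq_mul] at h
    linarith
  have quadHt_Hs : ∀ v : Fin d → ℝ,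
      cns * dotProduct v (Hs.mulVec v) ≤ dotProduct v (Ht.mulVec v) := by
    intro v
    have h1 := quadK_lo v
    have h2 := quadHt_lo v
    have h3 := quad_of_psd hHspsd v
    rw [hcns]
    nlinarith [hψ1]
  -- Ht invertibility
  have hHtPD : Ht.PosDef := by
    refine Matrix.PosDef.of_dotProduct_mulVec_pos
      (by rw [Matrix.IsHermitian, Matrix.conjTranspose_eq_transpose_of_trivial, hHtT])
      (fun v hv => ?_)
    have h1 := quadHt_Hs v
    have h2 := quadHs v
    have h3 := hdotpos v hv
    simpa using lt_of_lt_of_le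
      (mul_pos hcpos (lt_of_lt_of_le (mul_pos hlmin h3) h2)) h1
  have hdetHt : IsUnit Ht.det := (Matrix.isUnit_iff_isUnit_det Ht).mp hHtPD.isUnit
  have hHtinv : Ht * Ht⁻¹ = 1 := Matrix.mul_nonsing_inv _ hdetHt
  have hHtinv' : Ht⁻¹ * Ht = 1 := Matrix.nonsing_inv_mul _ hdetHt
  have hHtiT : (Ht⁻¹)ᵀ = Ht⁻¹ := by rw [Matrix.transpose_nonsing_inv, hHtT]
  have hHtipsd : (Ht⁻¹).PosSemidef := hHtPD.posSemidef.inv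
  -- the new error vector
  set ep : Fin d → ℝ := x + -(Ht⁻¹.mulVec (g x)) - xstar with hep
  have hepe : ep = e - Ht⁻¹.mulVec (g x) := by rw [hep, he]; abel
  have hkey : Ht.mulVec ep = Ht.mulVec e - g x := by
    rw [hepe, Matrix.mulVec_sub, Matrix.mulVec_mulVec, hHtinv, Matrix.one_mulVec]
  have hsum : (Ht - K).mulVec e + r = Ht.mulVec e - g x := by
    rw [hrdef, Matrix.sub_mulVec]; abel
  have hepd : ep = Ht⁻¹.mulVec ((Ht - K).mulVec e + r) := by
    rw [hsum, ← hkey, Matrix.mulVec_mulVec, hHtinv', Matrix.one_mulVec]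
  -- decomposition
  set w1 : Fin d → ℝ := R⁻¹.mulVec ((Ht - K).mulVec e) with hw1def
  set w2 : Fin d → ℝ := R⁻¹.mulVec r with hw2def
  set B : Matrix (Fin d) (Fin d) ℝ := R * Ht⁻¹ * R with hBdef
  have hRep : R.mulVec ep = B.mulVec (w1 + w2) := by
    rw [hepd, hw1def, hw2def, ← Matrix.mulVec_add, hBdef,
      Matrix.mulVec_mulVec, Matrix.mulVec_mulVec,
      Matrix.mul_assoc (R * Ht⁻¹) R R⁻¹, hRinv, Matrix.mul_one]
  have hBT : Bᵀ = B := by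
    rw [hBdef, Matrix.transpose_mul, Matrix.transpose_mul, hRT, hHtiT, Matrix.mul_assoc]
  have hBpsd : B.PosSemidef := by
    have h := hHtipsd.mul_mul_conjTranspose_same R
    rwa [hRpsd.1, ← hBdef] at h
  have hBquad : ∀ v : Fin d → ℝ,
      cns * dotProduct v (B.mulVec v) ≤ dotProduct v v := by
    intro v
    set w : Fin d → ℝ := Ht⁻¹.mulVec (R.mulVec v) with hw
    have hBv : B.mulVec v = R.mulVec w := by
      rw [hw, Matrix.mulVec_mulVec, Matrix.mulVec_mulVec, hBdef]
    have hRv : Ht.mulVec w = R.mulVec v := by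
      rw [hw, Matrix.mulVec_mulVec, hHtinv, Matrix.one_mulVec]
    have hq : dotProduct v (B.mulVec v) = dotProduct w (Ht.mulVec w) := by
      rw [hBv, dot_symm hRT, ← hRv, dotProduct_comm]
    have h1 := quadHt_Hs w
    have h2 := hQuadR w
    have h3 : dotProduct v (B.mulVec v) ≤ vnorm v * vnorm (R.mulVec w) := by
      rw [hBv]
      exact le_trans (le_abs_self _) (abs_dot_le v (R.mulVec w))
    have hq0 : 0 ≤ dotProduct v (B.mulVec v) := by
      rw [hq]
      nlinarith [sq_nonneg (vnorm (R.mulVec w)), hcpos]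
    rcases eq_or_lt_of_le hq0 with h | h
    · rw [← h, mul_zero, ← vnorm_sq v]
      positivity
    · have hsq : dotProduct v (B.mulVec v) ^ 2
          ≤ vnorm v ^ 2 * vnorm (R.mulVec w) ^ 2 := by
        nlinarith [hq0, h3, vnorm_nonneg v, vnorm_nonneg (R.mulVec w)]
      have h4 : cns * dotProduct v (B.mulVec v) ^ 2
          ≤ vnorm v ^ 2 * dotProduct v (B.mulVec v) := by
        have h5 : cns * vnorm (R.mulVec w) ^ 2 ≤ dotProduct v (B.mulVec v) := by
          rw [hq]; rw [h2] at h1; exact h1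
        nlinarith [sq_nonneg (vnorm v), hcpos, hsq]
      have h6 := le_of_mul_le_mul_right (by nlinarith : cns * dotProduct v (B.mulVec v) *
          dotProduct v (B.mulVec v) ≤ vnorm v ^ 2 * dotProduct v (B.mulVec v)) h
      rw [← vnorm_sq v]
      exact h6
  have hpsdB1 : (((1/cns) • (1 : Matrix (Fin d) (Fin d) ℝ)) - B).PosSemidef := by
    refine psd_of_quad ?_ ?_
    · rw [Matrix.transpose_sub, Matrix.transpose_smul, Matrix.transpose_one, hBT]
    · intro v
      rw [Matrix.sub_mulVec, dotProduct_sub, Matrix.smul_mulVec,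
        Matrix.one_mulVec, dotProduct_smul, smul_eq_mul]
      have h1 := hBquad v
      have h2 : dotProduct v (B.mulVec v) ≤ (1/cns) * dotProduct v v := by
        rw [div_mul_eq_mul_div, le_div_iff₀ hcpos, one_mul, mul_comm]
        exact h1
      linarith
  have hpsdB2 : (((1/cns) • (1 : Matrix (Fin d) (Fin d) ℝ)) + B).PosSemidef := by
    refine psd_of_quad ?_ ?_
    · rw [Matrix.transpose_add, Matrix.transpose_smul, Matrix.transpose_one, hBT]
    · intro v
      rw [Matrix.add_mulVec, dotProduct_add, Matrix.smul_mulVec,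
        Matrix.one_mulVec, dotProduct_smul, smul_eq_mul]
      have h1 := quad_of_psd hBpsd v
      have h2 : 0 ≤ dotProduct v v := by
        nlinarith [vnorm_sq v, sq_nonneg (vnorm v)]
      have : 0 ≤ 1/cns := by positivity
      nlinarith
  have hBop : ∀ v : Fin d → ℝ, vnorm (B.mulVec v) ≤ (1/cns) * vnorm v :=
    op_bound hBT (by positivity) hpsdB1 hpsdB2
  -- bound on w1 via the conjugated matrix
  set Dm : Matrix (Fin d) (Fin d) ℝ := Ht - K with hDmdef
  have hDmT : Dmᵀ = Dm := by rw [hDmdef, Matrix.transpose_sub, hHtT, hKT]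
  set Dt : Matrix (Fin d) (Fin d) ℝ := R⁻¹ * Dm * R⁻¹ with hDtdef
  have hDtT : Dtᵀ = Dt := by
    rw [hDtdef, Matrix.transpose_mul, Matrix.transpose_mul, hRiT, hDmT, Matrix.mul_assoc]
  set bb : ℝ := ψ * (1 + ν) with hbb
  have hbb0 : 0 ≤ bb := by rw [hbb]; nlinarith
  have hquadDm : ∀ v : Fin d → ℝ,
      |dotProduct v (Dm.mulVec v)| ≤ bb * dotProduct v (Hs.mulVec v) := by
    intro v
    have h0 : dotProduct v (Dm.mulVec v) =
        dotProduct v (Ht.mulVec v) - dotProduct v (K.mulVec v) := by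
      rw [hDmdef, Matrix.sub_mulVec, dotProduct_sub]
    have h1 := quadHt_up v
    have h2 := quadHt_lo v
    have h3 := quadK_up v
    have h4 := quad_of_psd hKpsd v
    rw [h0, hbb, abs_le]
    constructor <;> nlinarith [hψ0.le, hν0.le]
  have hquadDt : ∀ v : Fin d → ℝ,
      |dotProduct v (Dt.mulVec v)| ≤ bb * dotProduct v v := by
    intro v
    have hDtv : Dt.mulVec v = R⁻¹.mulVec (Dm.mulVec (R⁻¹.mulVec v)) := by
      rw [Matrix.mulVec_mulVec, Matrix.mulVec_mulVec, hDtdef]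
    have h1 : dotProduct v (Dt.mulVec v) =
        dotProduct (R⁻¹.mulVec v) (Dm.mulVec (R⁻¹.mulVec v)) := by
      rw [hDtv, dot_symm hRiT]
    have h2 : dotProduct (R⁻¹.mulVec v) (Hs.mulVec (R⁻¹.mulVec v)) =
        dotProduct v v := by
      rw [hQuadR, Matrix.mulVec_mulVec, hRinv, Matrix.one_mulVec, vnorm_sq]
    rw [h1, ← h2]
    exact hquadDm _
  have hpsdDt1 : ((bb • (1 : Matrix (Fin d) (Fin d) ℝ)) - Dt).PosSemidef := by
    refine psd_of_quad ?_ ?_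
    · rw [Matrix.transpose_sub, Matrix.transpose_smul, Matrix.transpose_one, hDtT]
    · intro v
      rw [Matrix.sub_mulVec, dotProduct_sub, Matrix.smul_mulVec,
        Matrix.one_mulVec, dotProduct_smul, smul_eq_mul]
      have := (abs_le.mp (hquadDt v)).2
      linarith
  have hpsdDt2 : ((bb • (1 : Matrix (Fin d) (Fin d) ℝ)) + Dt).PosSemidef := by
    refine psd_of_quad ?_ ?_
    · rw [Matrix.transpose_add, Matrix.transpose_smul, Matrix.transpose_one, hDtT]
    · intro v
      rw [Matrix.add_mulVec, dotProduct_add, Matrix.smul_mulVec,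
        Matrix.one_mulVec, dotProduct_smul, smul_eq_mul]
      have := (abs_le.mp (hquadDt v)).1
      linarith
  have hDtop : ∀ v : Fin d → ℝ, vnorm (Dt.mulVec v) ≤ bb * vnorm v :=
    op_bound hDtT hbb0 hpsdDt1 hpsdDt2
  have hw1 : vnorm w1 ≤ bb * vnorm (R.mulVec e) := by
    have h1 : Dt.mulVec (R.mulVec e) = w1 := by
      rw [Matrix.mulVec_mulVec, hDtdef, Matrix.mul_assoc (R⁻¹ * Dm) R⁻¹ R, hRinv',
        Matrix.mul_one, hw1def, ← Matrix.mulVec_mulVec]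
    rw [← h1]
    exact hDtop _
  -- bound on w2
  have hRw2 : R.mulVec w2 = r := by
    rw [hw2def, Matrix.mulVec_mulVec, hRinv, Matrix.one_mulVec]
  have hw2a : lmin * dotProduct w2 w2 ≤ vnorm r ^ 2 := by
    have h := quadHs w2
    rw [hQuadR w2, hRw2] at h
    exact h
  have hw2 : vnorm w2 ≤ ν * vnorm (R.mulVec e) := by
    have h1 : vnorm r ≤ ν * lmin * vnorm e := by
      nlinarith [vnorm_nonneg e, hrn, hLe, hL, vnorm_nonneg r]
    have h2 : lmin * vnorm e ^ 2 ≤ vnorm (R.mulVec e) ^ 2 := by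
      have h := quadHs e
      rw [hQuadR e] at h
      nlinarith [vnorm_sq e]
    have h3 : vnorm w2 ^ 2 ≤ ν ^ 2 * vnorm (R.mulVec e) ^ 2 := by
      have hww := vnorm_sq w2
      have hr2 : vnorm r ^ 2 ≤ (ν * lmin * vnorm e) ^ 2 := by
        have h5 := mul_self_le_mul_self (vnorm_nonneg r) h1
        nlinarith [h5]
      have hint : 0 ≤ ν ^ 2 * lmin * (vnorm (R.mulVec e) ^ 2 - lmin * vnorm e ^ 2) :=
        mul_nonneg (mul_nonneg (sq_nonneg ν) hlmin.le) (by linarith)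
      nlinarith [hw2a, hr2, hww, hlmin, hint]
    have h4 : (ν * vnorm (R.mulVec e)) ^ 2 = ν ^ 2 * vnorm (R.mulVec e) ^ 2 := by ring
    refine le_of_sq_le_sq (vnorm_nonneg w2) (mul_nonneg hν0.le (vnorm_nonneg _)) ?_
    rw [h4]
    exact h3
  -- final assembly
  have hfinal : vnorm (R.mulVec ep) ≤ (1/cns) * ((bb + ν) * vnorm (R.mulVec e)) := by
    rw [hRep]
    have h1 := hBop (w1 + w2)
    have h2 := vnorm_add_le w1 w2
    have h3 : vnorm (w1 + w2) ≤ (bb + ν) * vnorm (R.mulVec e) := by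
      calc vnorm (w1 + w2) ≤ vnorm w1 + vnorm w2 := h2
        _ ≤ bb * vnorm (R.mulVec e) + ν * vnorm (R.mulVec e) := add_le_add hw1 hw2
        _ = (bb + ν) * vnorm (R.mulVec e) := by ring
    calc vnorm (B.mulVec (w1 + w2)) ≤ (1/cns) * vnorm (w1 + w2) := h1
      _ ≤ (1/cns) * ((bb + ν) * vnorm (R.mulVec e)) := by
          have : 0 ≤ (1:ℝ)/cns := by positivity
          nlinarith
  have hnum : (1/cns) * (bb + ν) ≤ 3 * (ν + ψ) := by
    rw [hbb, hcns, div_mul_eq_mul_div, one_mul, div_le_iff₀ hcpos]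
    rw [hcns] at hcpos ⊢
    have h49 : (4:ℝ)/9 ≤ (1 - ψ) * (1 - ν) := by nlinarith
    have hint1 : 0 ≤ (ν + ψ) * ((1 - ψ) * (1 - ν) - 4/9) :=
      mul_nonneg (by linarith) (by linarith)
    have hint2 : ψ * ν ≤ (1/3) * ν := by nlinarith
    nlinarith [hint1, hint2]
  rw [hMn, hMn]
  calc vnorm (R.mulVec ep) ≤ (1/cns) * ((bb + ν) * vnorm (R.mulVec e)) := hfinal
    _ = ((1/cns) * (bb + ν)) * vnorm (R.mulVec e) := by ring
    _ ≤ 3 * (ν + ψ) * vnorm (R.mulVec e) := by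
        nlinarith [vnorm_nonneg (R.mulVec e), hnum, hcpos, hbb0]
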